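/- For every symmetric convex body K ⊂ ℝ^n, the Löwner ellipsoid satisfies Löw(K) ⊆ √n · K; equivalently, vrad(K) ≥ vrad(Löw(K))/√n. -/

import Mathlib

open MeasureTheory Pointwise

/-- An ellipsoid in `ℝ^n`. -/
def IsEllipsoid {n : ℕ} (E : Set (EuclideanSpace ℝ (Fin n))) : Prop :=
  ∃ (L : EuclideanSpace ℝ (Fin n) ≃ₗ[ℝ] EuclideanSpace ℝ (Fin n))
    (c : EuclideanSpace ℝ (Fin n)),
    E = (fun x => c + L x) '' Metric.closedBall (0 : EuclideanSpace ℝ (Fin n)) 1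

/-- `E` is the Löwner (minimal-volume circumscribed) ellipsoid of `K`. -/
def IsLoewner {n : ℕ} (K E : Set (EuclideanSpace ℝ (Fin n))) : Prop :=
  IsEllipsoid E ∧ K ⊆ E ∧
    ∀ E', IsEllipsoid E' → K ⊆ E' → volume E ≤ volume E'

open Metric RealInnerProductSpace

section Helpers

lemma keyIneq {p : ℝ} (hp0 : 0 < p) (hp1 : p < 1) (m : ℕ) : p * (1 + (1-p)/m)^m < 1 := by
  have h0 : (0:ℝ) ≤ (1-p)/m := div_nonneg (by linarith) (Nat.cast_nonneg m)
  have h1 : (1 + (1-p)/(m:ℝ)) ^ m ≤ Real.exp (1 - p) := by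
    calc (1 + (1-p)/(m:ℝ))^m ≤ (Real.exp ((1-p)/m))^m := by
          apply pow_le_pow_left₀ (by linarith)
          linarith [Real.add_one_le_exp ((1-p)/(m:ℝ))]
      _ = Real.exp (m * ((1-p)/m)) := by rw [← Real.exp_nat_mul]
      _ ≤ Real.exp (1-p) := by
          apply Real.exp_le_exp.2
          rcases Nat.eq_zero_or_pos m with hm | hm
          · simp [hm]; linarith
          · rw [mul_div_cancel₀]
            positivity
  have h2 : p * Real.exp (1 - p) < 1 := by
    have := Real.log_lt_sub_one_of_pos hp0 hp1.ne
    have h3 : p < Real.exp (p - 1) := by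
      calc p = Real.exp (Real.log p) := (Real.exp_log hp0).symm
        _ < Real.exp (p-1) := Real.exp_lt_exp.2 this
    have h4 : Real.exp (p-1) * Real.exp (1-p) = 1 := by
      rw [← Real.exp_add]; ring_nf; exact Real.exp_zero
    nlinarith [Real.exp_pos (1-p)]
  nlinarith [Real.exp_pos (1-p), pow_nonneg (by linarith : (0:ℝ) ≤ 1 + (1-p)/m) m]

noncomputable def stretch {n : ℕ} (v : EuclideanSpace ℝ (Fin n)) (α β : ℝ) :
    EuclideanSpace ℝ (Fin n) →ₗ[ℝ] EuclideanSpace ℝ (Fin n) where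
  toFun x := β • x + (α - β) • (⟪v, x⟫ : ℝ) • v
  map_add' x y := by
    simp only [inner_add_right, add_smul, smul_add]
    module
  map_smul' r x := by
    simp only [inner_smul_right, RingHom.id_apply, smul_smul, smul_add]
    module

lemma stretch_apply {n : ℕ} (v : EuclideanSpace ℝ (Fin n)) (α β : ℝ) (x) :
    stretch v α β x = β • x + (α - β) • (⟪v, x⟫ : ℝ) • v := rfl

lemma stretch_comp {n : ℕ} (v : EuclideanSpace ℝ (Fin n)) (hv : ‖v‖ = 1) (α β γ δ : ℝ) :
    stretch v α β ∘ₗ stretch v γ δ = stretch v (α*γ) (β*δ) := by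
  have hvv : (⟪v, v⟫ : ℝ) = 1 := by
    rw [real_inner_self_eq_norm_mul_norm, hv]; ring
  apply LinearMap.ext; intro x
  simp only [LinearMap.comp_apply, stretch_apply, inner_add_right, inner_smul_right, hvv,
    mul_one, smul_smul, smul_add]
  match_scalars <;> ring

lemma stretch_one {n : ℕ} (v : EuclideanSpace ℝ (Fin n)) : stretch v 1 1 = LinearMap.id := by
  apply LinearMap.ext; intro x
  simp [stretch_apply]

noncomputable def stretchEquiv {n : ℕ} (v : EuclideanSpace ℝ (Fin n)) (hv : ‖v‖ = 1)
    (α β : ℝ) (hα : α ≠ 0) (hβ : β ≠ 0) :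
    EuclideanSpace ℝ (Fin n) ≃ₗ[ℝ] EuclideanSpace ℝ (Fin n) :=
  LinearEquiv.ofLinear (stretch v α β) (stretch v α⁻¹ β⁻¹)
    (by rw [stretch_comp v hv, mul_inv_cancel₀ hα, mul_inv_cancel₀ hβ, stretch_one])
    (by rw [stretch_comp v hv, inv_mul_cancel₀ hα, inv_mul_cancel₀ hβ, stretch_one])

lemma stretchEquiv_toLinearMap {n : ℕ} (v : EuclideanSpace ℝ (Fin n)) (hv : ‖v‖ = 1)
    (α β : ℝ) (hα : α ≠ 0) (hβ : β ≠ 0) :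
    (stretchEquiv v hv α β hα hβ).toLinearMap = stretch v α β := rfl

lemma stretchEquiv_symm_apply {n : ℕ} (v : EuclideanSpace ℝ (Fin n)) (hv : ‖v‖ = 1)
    (α β : ℝ) (hα : α ≠ 0) (hβ : β ≠ 0) (x) :
    (stretchEquiv v hv α β hα hβ).symm x = stretch v α⁻¹ β⁻¹ x := rfl

lemma norm_stretch_sq {n : ℕ} (v x : EuclideanSpace ℝ (Fin n)) (hv : ‖v‖ = 1) (α β : ℝ) :
    ‖stretch v α β x‖^2
      = β^2 * (‖x‖^2 - (⟪v, x⟫ : ℝ)^2) + α^2 * (⟪v, x⟫ : ℝ)^2 := by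
  rw [stretch_apply, norm_add_sq_real]
  rw [norm_smul, norm_smul, norm_smul, real_inner_smul_left, real_inner_smul_right,
    real_inner_smul_right]
  simp only [Real.norm_eq_abs, hv, mul_one, real_inner_comm x v]
  simp only [mul_pow, sq_abs]
  ring

lemma det_stretch_e0 {m : ℕ} (α β : ℝ) :
    LinearMap.det (stretch (EuclideanSpace.single (0 : Fin (m+1)) (1:ℝ)) α β) = α * β ^ m := by
  set e0 : EuclideanSpace ℝ (Fin (m+1)) := EuclideanSpace.single (0 : Fin (m+1)) (1:ℝ) with he0
  set b := (EuclideanSpace.basisFun (Fin (m+1)) ℝ).toBasis with hb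
  have hmat : LinearMap.toMatrix b b (stretch e0 α β)
      = Matrix.diagonal (fun i : Fin (m+1) => if i = 0 then α else β) := by
    ext i j
    rw [LinearMap.toMatrix_apply]
    have hbj : b j = EuclideanSpace.single j (1:ℝ) := by
      simp [hb, EuclideanSpace.basisFun_apply]
    rw [hbj]
    have hrepr : ∀ y : EuclideanSpace ℝ (Fin (m+1)), b.repr y i = y i := by
      intro y; simp [hb, OrthonormalBasis.coe_toBasis_repr_apply]
    rw [hrepr]
    rw [stretch_apply]
    have hinner : (⟪e0, EuclideanSpace.single j (1:ℝ)⟫ : ℝ) = if j = 0 then 1 else 0 := by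
      rw [he0, EuclideanSpace.inner_single_left]
      simp [EuclideanSpace.single_apply]
      split <;> simp_all [eq_comm]
    rw [hinner]
    simp only [PiLp.add_apply, PiLp.smul_apply, smul_eq_mul]
    rw [he0]
    by_cases hij : i = j <;> by_cases hj0 : j = 0 <;>
      simp [Matrix.diagonal, hij, hj0, EuclideanSpace.single_apply, eq_comm] <;> ring_nf <;>
      simp_all [EuclideanSpace.single_apply, eq_comm]
  have := LinearMap.det_toMatrix b (stretch e0 α β)
  rw [hmat] at this
  rw [← this, Matrix.det_diagonal, Fin.prod_univ_succ]
  simp [Fin.succ_ne_zero]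

lemma det_stretch {m : ℕ} (v : EuclideanSpace ℝ (Fin (m+1))) (hv : ‖v‖ = 1) (α β : ℝ) :
    LinearMap.det (stretch v α β) = α * β ^ m := by
  set e0 : EuclideanSpace ℝ (Fin (m+1)) := EuclideanSpace.single (0 : Fin (m+1)) (1:ℝ) with he0
  have he0n : ‖e0‖ = 1 := by simp [he0, EuclideanSpace.norm_single]
  set Q := Submodule.reflection (Submodule.span ℝ {e0 - v})ᗮ with hQdef
  have hQ0 : Q e0 = v := Submodule.reflection_sub (by rw [he0n, hv])
  have hQQ : ∀ x, Q (Q x) = x := Submodule.reflection_involutive _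
  have hQv : Q v = e0 := by rw [← hQ0, hQQ]
  set QL : EuclideanSpace ℝ (Fin (m+1)) →ₗ[ℝ] EuclideanSpace ℝ (Fin (m+1)) :=
    Q.toLinearEquiv.toLinearMap with hQL
  have hQLapp : ∀ x, QL x = Q x := fun x => rfl
  have key : stretch v α β = QL ∘ₗ stretch e0 α β ∘ₗ QL := by
    apply LinearMap.ext; intro x
    simp only [LinearMap.comp_apply, stretch_apply, hQLapp]
    rw [map_add]
    simp only [_root_.map_smul, hQQ, hQ0]
    have : (⟪e0, Q x⟫ : ℝ) = ⟪v, x⟫ := by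
      rw [← hQv, LinearIsometryEquiv.inner_map_map]
    rw [this]
  have hQQL : QL ∘ₗ QL = LinearMap.id := by
    apply LinearMap.ext; intro x; simp [hQLapp, hQQ]
  have hdetQ : LinearMap.det QL * LinearMap.det QL = 1 := by
    rw [← LinearMap.det_comp, hQQL, LinearMap.det_id]
  rw [key, LinearMap.det_comp, LinearMap.det_comp, det_stretch_e0]
  have h2 : LinearMap.det QL * (α * β ^ m * LinearMap.det QL)
      = (LinearMap.det QL * LinearMap.det QL) * (α * β ^ m) := by ring
  rw [h2, hdetQ, one_mul]

lemma vol_ellipsoid_image {n : ℕ} (c : EuclideanSpace ℝ (Fin n))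
    (L : EuclideanSpace ℝ (Fin n) ≃ₗ[ℝ] EuclideanSpace ℝ (Fin n))
    (s : Set (EuclideanSpace ℝ (Fin n))) :
    volume ((fun x => c + L x) '' s)
      = ENNReal.ofReal |LinearMap.det L.toLinearMap| * volume s := by
  have h1 : (fun x => c + L x) '' s = c +ᵥ (⇑L.toLinearMap '' s) := by
    rw [← Set.image_vadd, ← Set.image_comp]
    rfl
  rw [h1, measure_vadd, Measure.addHaar_image_linearMap]

lemma ennreal_cancel_le {A B : ℝ} {V : ENNReal} (hV0 : V ≠ 0) (hVt : V ≠ ⊤) (hB : 0 ≤ B)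
    (h : ENNReal.ofReal A * V ≤ ENNReal.ofReal B * V) : A ≤ B := by
  have h2 := (ENNReal.mul_le_mul_iff_left hV0 hVt).1 h
  exact (ENNReal.ofReal_le_ofReal_iff hB).1 h2

lemma inner_sq_dim_one (v x : EuclideanSpace ℝ (Fin 1)) (hv : ‖v‖ = 1) :
    (⟪v, x⟫ : ℝ)^2 = ‖x‖^2 := by
  have h1 : (⟪v, x⟫ : ℝ) = v 0 * x 0 := by
    rw [PiLp.inner_apply, Fin.sum_univ_one]
    simp [RCLike.inner_apply]; ring
  have h2 : (⟪v, v⟫ : ℝ) = v 0 * v 0 := by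
    rw [PiLp.inner_apply, Fin.sum_univ_one]
    simp [RCLike.inner_apply]; ring
  have h3 : (⟪x, x⟫ : ℝ) = x 0 * x 0 := by
    rw [PiLp.inner_apply, Fin.sum_univ_one]
    simp [RCLike.inner_apply]; ring
  have h4 : (⟪v, v⟫ : ℝ) = 1 := by rw [real_inner_self_eq_norm_mul_norm, hv]; ring
  have h5 : ‖x‖^2 = (⟪x, x⟫ : ℝ) := (real_inner_self_eq_norm_sq x).symm
  rw [h1, h5, h3]
  nlinarith [h2, h4]

lemma vol_ball_pos (n : ℕ) : 0 < volume (closedBall (0 : EuclideanSpace ℝ (Fin n)) 1) :=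
  measure_closedBall_pos volume 0 one_pos

lemma vol_ball_ne_top (n : ℕ) : volume (closedBall (0 : EuclideanSpace ℝ (Fin n)) 1) ≠ ⊤ :=
  (isCompact_closedBall 0 1).measure_lt_top.ne

end Helpers

set_option maxHeartbeats 1000000 in
/-- Core lemma: if the unit ball is a minimal ellipsoid containing the symmetric convex
compact set `K`, then the ball is contained in `√n • K`. -/
lemma core_john {m : ℕ} (K : Set (EuclideanSpace ℝ (Fin (m+1))))
    (hKc : Convex ℝ K) (hKcp : IsCompact K) (hne : K.Nonempty) (hsym : K = -K)
    (hKB : K ⊆ closedBall 0 1)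
    (hmin : ∀ E', IsEllipsoid E' → K ⊆ E' →
      volume (closedBall (0 : EuclideanSpace ℝ (Fin (m+1))) 1) ≤ volume E') :
    closedBall (0 : EuclideanSpace ℝ (Fin (m+1))) 1 ⊆ Real.sqrt ((m+1 : ℕ) : ℝ) • K := by
  set N : ℝ := ((m+1 : ℕ) : ℝ) with hN
  have hNm : N = (m:ℝ) + 1 := by rw [hN]; push_cast; ring
  have hN1 : (1:ℝ) ≤ N := by rw [hNm]; have := Nat.cast_nonneg (α := ℝ) m; linarith
  have hN0 : (0:ℝ) < N := by linarith
  set sN := Real.sqrt N with hsN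
  have hsN0 : 0 < sN := Real.sqrt_pos.2 hN0
  have hsN2 : sN^2 = N := Real.sq_sqrt hN0.le
  intro x₀ hx₀
  by_contra hx₀K
  have h0K : (0 : EuclideanSpace ℝ (Fin (m+1))) ∈ K := by
    obtain ⟨z, hz⟩ := hne
    have hz' : -z ∈ K := by rw [hsym]; exact Set.neg_mem_neg.2 hz
    have h2 := hKc hz hz' (by norm_num : (0:ℝ) ≤ 1/2) (by norm_num : (0:ℝ) ≤ 1/2) (by norm_num)
    simpa using h2
  have hsnKc : Convex ℝ (sN • K) := hKc.smul sN
  have hsnKcp : IsCompact (sN • K) := by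
    have h2 := hKcp.image (continuous_const_smul sN)
    simpa [Set.image_smul] using h2
  obtain ⟨f, u, hfu, hux⟩ := geometric_hahn_banach_closed_point hsnKc hsnKcp.isClosed hx₀K
  have hu0 : 0 < u := by
    have h0' : (0 : EuclideanSpace ℝ (Fin (m+1))) ∈ sN • K := by
      have h2 := Set.smul_mem_smul_set (a := sN) h0K; simpa using h2
    have h2 := hfu 0 h0'
    simpa using h2
  set v₀ := (InnerProductSpace.toDual ℝ (EuclideanSpace ℝ (Fin (m+1)))).symm f with hv₀def
  have hv₀app : ∀ y, (⟪v₀, y⟫ : ℝ) = f y := fun y => InnerProductSpace.toDual_symm_apply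
  have hfx₀ : u < (⟪v₀, x₀⟫ : ℝ) := by rw [hv₀app]; exact hux
  have hv₀ne : v₀ ≠ 0 := by
    intro h
    rw [h, inner_zero_left] at hfx₀; linarith
  have hnv₀ : 0 < ‖v₀‖ := norm_pos_iff.2 hv₀ne
  set v := ‖v₀‖⁻¹ • v₀ with hvdef
  have hv : ‖v‖ = 1 := by
    rw [hvdef, norm_smul, Real.norm_eq_abs, abs_of_pos (inv_pos.2 hnv₀)]
    field_simp
  set h := u / (sN * ‖v₀‖) with hhdef
  have hh0 : 0 < h := div_pos hu0 (by positivity)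
  have hinner_lt : ∀ x ∈ K, (⟪v, x⟫ : ℝ) < h := by
    intro x hx
    have h1 : f (sN • x) < u := hfu _ (Set.smul_mem_smul_set hx)
    rw [ContinuousLinearMap.map_smul, smul_eq_mul] at h1
    have h2 : (⟪v, x⟫ : ℝ) = ‖v₀‖⁻¹ * f x := by
      rw [hvdef, real_inner_smul_left, hv₀app]
    have h3 : f x < u / sN := by rw [lt_div_iff₀ hsN0]; linarith [h1]
    rw [h2, hhdef]
    calc ‖v₀‖⁻¹ * f x < ‖v₀‖⁻¹ * (u / sN) := by
          exact mul_lt_mul_of_pos_left h3 (inv_pos.2 hnv₀)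
      _ = u / (sN * ‖v₀‖) := by rw [inv_mul_eq_div, div_div]
  have habs : ∀ x ∈ K, |(⟪v, x⟫ : ℝ)| ≤ h := by
    intro x hx
    have h1 := hinner_lt x hx
    have hx' : -x ∈ K := by rw [hsym]; exact Set.neg_mem_neg.2 hx
    have h2 := hinner_lt _ hx'
    rw [inner_neg_right] at h2
    rw [abs_le]; constructor <;> linarith
  have hhlt : h < sN⁻¹ := by
    have h1 : (⟪v₀, x₀⟫ : ℝ) ≤ ‖v₀‖ * ‖x₀‖ := real_inner_le_norm v₀ x₀
    have hx₀n : ‖x₀‖ ≤ 1 := mem_closedBall_zero_iff.1 hx₀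
    have h2 : u < ‖v₀‖ := by nlinarith
    rw [hhdef, div_lt_iff₀ (by positivity)]
    calc u < ‖v₀‖ := h2
      _ = sN⁻¹ * (sN * ‖v₀‖) := by field_simp
  set p := N * h^2 with hpdef
  have hp0 : 0 < p := by positivity
  have hp1 : p < 1 := by
    have h1 : h * sN < 1 := by
      have h2 := mul_lt_mul_of_pos_right hhlt hsN0
      rwa [inv_mul_cancel₀ hsN0.ne'] at h2
    have h2 : (h*sN)^2 < 1 := by nlinarith [mul_pos hh0 hsN0]
    have h3 : (h*sN)^2 = p := by rw [mul_pow, hsN2, hpdef]; ring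
    linarith
  set α := Real.sqrt p with hαdef
  have hα0 : 0 < α := Real.sqrt_pos.2 hp0
  have hα2 : α^2 = p := Real.sq_sqrt hp0.le
  set bsq := 1 + (1-p)/(m:ℝ) with hbsqdef
  have hbsq1 : 1 ≤ bsq := by
    have h2 : (0:ℝ) ≤ (1-p)/(m:ℝ) := div_nonneg (by linarith) (Nat.cast_nonneg m)
    rw [hbsqdef]; linarith
  set β := Real.sqrt bsq with hβdef
  have hβ0 : 0 < β := Real.sqrt_pos.2 (by linarith)
  have hβ2 : β^2 = bsq := Real.sq_sqrt (by linarith)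
  have hαβ : α ≤ β := by
    rw [hαdef, hβdef]; exact Real.sqrt_le_sqrt (by linarith)
  set S := stretchEquiv v hv α β hα0.ne' hβ0.ne' with hSdef
  have hKE'' : K ⊆ (fun x => 0 + S x) '' closedBall 0 1 := by
    intro x hx
    refine ⟨S.symm x, ?_, by simp⟩
    rw [mem_closedBall_zero_iff]
    have hns : ‖(S.symm x)‖^2
        = (β⁻¹)^2 * (‖x‖^2 - (⟪v,x⟫:ℝ)^2) + (α⁻¹)^2 * (⟪v,x⟫:ℝ)^2 := by
      rw [hSdef, stretchEquiv_symm_apply, norm_stretch_sq v x hv]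
    set t := (⟪v,x⟫:ℝ) with htdef
    have ht2 : t^2 ≤ h^2 := by
      have h1 := abs_le.1 (habs x hx)
      exact sq_le_sq' h1.1 h1.2
    have htx : t^2 ≤ ‖x‖^2 := by
      have h1 := abs_real_inner_le_norm v x
      rw [hv, one_mul] at h1
      have h2 := abs_le.1 h1
      exact sq_le_sq' h2.1 h2.2
    have hxn : ‖x‖ ≤ 1 := mem_closedBall_zero_iff.1 (hKB hx)
    have hgoal : ‖(S.symm x)‖^2 ≤ 1 := by
      rw [hns]
      rcases Nat.eq_zero_or_pos m with hm | hm
      · -- dimension 1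
        subst hm
        have hdim : t^2 = ‖x‖^2 := inner_sq_dim_one v x hv
        have hβ1 : β = 1 := by
          rw [hβdef, hbsqdef]; norm_num
        have hp' : p = h^2 := by rw [hpdef, hN]; norm_num
        have hx2 : ‖x‖^2 ≤ α^2 := by rw [hα2, hp']; linarith
        have hinv : (α⁻¹)^2 * α^2 = 1 := by field_simp
        rw [hβ1, ← hdim]
        have hx2' : t^2 ≤ α^2 := by rw [← hdim] at hx2; exact hx2
        have h7 : (α⁻¹)^2 * t^2 ≤ 1 := by
          rw [← hinv]
          exact mul_le_mul_of_nonneg_left hx2' (sq_nonneg α⁻¹)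
        have h8 : ((1:ℝ)⁻¹)^2*(t^2 - t^2) = 0 := by ring
        linarith [h7, h8]
      · -- m ≥ 1
        have hm1 : (1:ℝ) ≤ (m:ℝ) := by exact_mod_cast hm
        have hB : β^2 = (N - N*h^2)/(m:ℝ) := by
          rw [hβ2, hbsqdef, hpdef, hNm]; field_simp; ring
        have heq : (β⁻¹)^2 * (‖x‖^2 - t^2) + (α⁻¹)^2 * t^2
            = (α^2*(‖x‖^2 - t^2) + β^2*t^2)/(α^2*β^2) := by
          field_simp
        rw [heq, div_le_one (by positivity)]
        have hkey : α^2 + (β^2 - α^2)*h^2 = α^2*β^2 := by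
          rw [hα2, hpdef, hB, hNm]
          field_simp
          ring
        have hAB2 : α^2 ≤ β^2 := pow_le_pow_left₀ hα0.le hαβ 2
        have hX1 : ‖x‖^2 ≤ 1 := pow_le_one₀ (norm_nonneg x) hxn
        calc α^2*(‖x‖^2 - t^2) + β^2*t^2 = α^2*‖x‖^2 + (β^2 - α^2)*t^2 := by ring
          _ ≤ α^2*1 + (β^2 - α^2)*h^2 := by
              have h5 : α^2*‖x‖^2 ≤ α^2*1 :=
                mul_le_mul_of_nonneg_left (by linarith) (sq_nonneg α)
              have h6 : (β^2 - α^2)*t^2 ≤ (β^2 - α^2)*h^2 :=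
                mul_le_mul_of_nonneg_left ht2 (by linarith)
              linarith
          _ = α^2 + (β^2 - α^2)*h^2 := by ring
          _ = α^2*β^2 := hkey
    exact (pow_le_one_iff_of_nonneg (norm_nonneg _) two_ne_zero).1 hgoal
  have hdetS : LinearMap.det S.toLinearMap = α * β^m := by
    rw [hSdef, stretchEquiv_toLinearMap, det_stretch v hv]
  have hprod : α * β^m < 1 := by
    have h1 : (α*β^m)^2 = p * bsq^m := by
      rw [mul_pow, ← pow_mul, mul_comm m 2, pow_mul, hα2, hβ2]
    have h2 : p * bsq^m < 1 := keyIneq hp0 hp1 m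
    nlinarith [mul_pos hα0 (pow_pos hβ0 m)]
  have hlt : volume ((fun x => 0 + S x) '' closedBall 0 1)
      < volume (closedBall (0:EuclideanSpace ℝ (Fin (m+1))) 1) := by
    rw [vol_ellipsoid_image, hdetS, abs_of_pos (mul_pos hα0 (pow_pos hβ0 m))]
    calc ENNReal.ofReal (α*β^m) * volume (closedBall (0:EuclideanSpace ℝ (Fin (m+1))) 1)
        < 1 * volume (closedBall (0:EuclideanSpace ℝ (Fin (m+1))) 1) := by
          apply (ENNReal.mul_lt_mul_iff_left (vol_ball_pos (m+1)).ne' (vol_ball_ne_top (m+1))).2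
          rw [← ENNReal.ofReal_one]
          exact (ENNReal.ofReal_lt_ofReal_iff one_pos).2 hprod
      _ = _ := one_mul _
  exact absurd (hmin _ ⟨S, 0, rfl⟩ hKE'') (not_le.2 hlt)

set_option maxHeartbeats 1000000 in
/-- John's theorem, symmetric case: for a symmetric convex body `K ⊂ ℝ^n`, the Löwner
ellipsoid satisfies `Löw(K) ⊆ √n · K`. -/
theorem stmt_16 (n : ℕ) (K : Set (EuclideanSpace ℝ (Fin n)))
    (hKc : Convex ℝ K) (hKcp : IsCompact K) (hKne : (interior K).Nonempty)
    (hKsym : K = -K) (E : Set (EuclideanSpace ℝ (Fin n))) (hE : IsLoewner K E) :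
    E ⊆ Real.sqrt n • K := by
  obtain ⟨z, hz⟩ := hKne
  have hzK : z ∈ K := interior_subset hz
  rcases Nat.eq_zero_or_pos n with hn | hn
  · subst hn
    intro x _
    have hx0 : x = 0 := by
      have h1 : ‖x‖ = 0 := by
        rw [EuclideanSpace.norm_eq]
        simp
      exact norm_eq_zero.1 h1
    have h2 : Real.sqrt ((0:ℕ):ℝ) = 0 := by norm_num
    rw [h2, Set.zero_smul_set ⟨z, hzK⟩, hx0]
    exact Set.zero_mem_zero
  obtain ⟨m, rfl⟩ : ∃ m, n = m + 1 := ⟨n - 1, (Nat.succ_pred_eq_of_pos hn).symm⟩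
  obtain ⟨hEell, hKE, hminE⟩ := hE
  obtain ⟨L, c, hEeq⟩ := hEell
  subst hEeq
  set B := closedBall (0 : EuclideanSpace ℝ (Fin (m+1))) 1 with hBdef
  have hdetL : LinearMap.det L.toLinearMap ≠ 0 := (LinearEquiv.isUnit_det' L).ne_zero
  have hmem : ∀ x : EuclideanSpace ℝ (Fin (m+1)),
      x ∈ (fun y => c + L y) '' B ↔ ‖L.symm (x - c)‖ ≤ 1 := by
    intro x
    constructor
    · rintro ⟨y, hy, rfl⟩
      simpa using mem_closedBall_zero_iff.1 hy
    · intro hx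
      exact ⟨L.symm (x - c), mem_closedBall_zero_iff.2 hx, by simp⟩
  -- Step A : the center is 0
  set d := L.symm c with hd
  have hKn : ∀ x ∈ K, ‖L.symm x - d‖ ≤ 1 := by
    intro x hx
    have h1 := (hmem x).1 (hKE hx)
    have h2 : L.symm (x - c) = L.symm x - d := by rw [map_sub, hd]
    rwa [h2] at h1
  have hKn2 : ∀ x ∈ K, ‖L.symm x + d‖ ≤ 1 := by
    intro x hx
    have hx' : -x ∈ K := by rw [hKsym]; exact Set.neg_mem_neg.2 hx
    have h1 := hKn _ hx'
    rw [map_neg] at h1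
    have h2 : -(L.symm x) - d = -((L.symm x) + d) := by abel
    rw [h2, norm_neg] at h1
    exact h1
  have hpar : ∀ x ∈ K, ‖L.symm x‖^2 + ‖d‖^2 ≤ 1 := by
    intro x hx
    have h1 := hKn x hx
    have h2 := hKn2 x hx
    have e1 : ‖L.symm x + d‖^2
        = ‖L.symm x‖^2 + 2*(⟪L.symm x, d⟫:ℝ) + ‖d‖^2 := norm_add_sq_real _ _
    have e2 : ‖L.symm x - d‖^2
        = ‖L.symm x‖^2 - 2*(⟪L.symm x, d⟫:ℝ) + ‖d‖^2 := norm_sub_sq_real _ _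
    nlinarith [norm_nonneg (L.symm x + d), norm_nonneg (L.symm x - d)]
  have hd1 : ‖d‖ < 1 := by
    by_contra hcon
    push_neg at hcon
    have hK0 : ∀ x ∈ K, x = 0 := by
      intro x hx
      have h1 := hpar x hx
      have h2 : ‖L.symm x‖ = 0 := by nlinarith [norm_nonneg (L.symm x), norm_nonneg d]
      have h3 : L.symm x = 0 := norm_eq_zero.1 h2
      have h4 := congrArg L h3
      simpa using h4
    obtain ⟨ε, hε0, hball⟩ := Metric.isOpen_iff.1 isOpen_interior z hz
    have hz0 : z = 0 := hK0 z hzK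
    set w : EuclideanSpace ℝ (Fin (m+1)) := EuclideanSpace.single 0 (ε/2) with hw
    have hwn : ‖w‖ = ε/2 := by
      rw [hw, EuclideanSpace.norm_single, Real.norm_eq_abs, abs_of_pos]; linarith
    have hwb : w ∈ ball z ε := by
      rw [mem_ball, dist_eq_norm, hz0, sub_zero, hwn]; linarith
    have hw0 : w = 0 := hK0 w (interior_subset (hball hwb))
    rw [hw0] at hwn
    simp only [norm_zero] at hwn
    linarith
  set r := Real.sqrt (1 - ‖d‖^2) with hr
  have hr0 : 0 < r := Real.sqrt_pos.2 (by nlinarith [norm_nonneg d])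
  have hr2 : r^2 = 1 - ‖d‖^2 := Real.sq_sqrt (by nlinarith [norm_nonneg d])
  have hrle : r ≤ 1 := by
    rw [hr]; exact Real.sqrt_le_one.2 (by nlinarith [norm_nonneg d])
  have hKr : ∀ x ∈ K, ‖L.symm x‖ ≤ r := by
    intro x hx
    have h1 := hpar x hx
    nlinarith [norm_nonneg (L.symm x), hr0]
  set Lr := LinearEquiv.ofLinear (r • L.toLinearMap) (r⁻¹ • L.symm.toLinearMap)
      (by apply LinearMap.ext; intro x
          simp [LinearMap.smul_apply, smul_smul, mul_inv_cancel₀ hr0.ne',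
            inv_mul_cancel₀ hr0.ne'])
      (by apply LinearMap.ext; intro x
          simp [LinearMap.smul_apply, smul_smul, mul_inv_cancel₀ hr0.ne',
            inv_mul_cancel₀ hr0.ne']) with hLr
  have hKLr : K ⊆ (fun x => 0 + Lr x) '' B := by
    intro x hx
    refine ⟨r⁻¹ • L.symm x, ?_, ?_⟩
    · rw [mem_closedBall_zero_iff, norm_smul, Real.norm_eq_abs, abs_of_pos (inv_pos.2 hr0)]
      calc r⁻¹ * ‖L.symm x‖ ≤ r⁻¹ * r :=
            mul_le_mul_of_nonneg_left (hKr x hx) (inv_pos.2 hr0).le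
        _ = 1 := inv_mul_cancel₀ hr0.ne'
    · show 0 + Lr (r⁻¹ • L.symm x) = x
      have h1 : Lr (r⁻¹ • L.symm x) = r • L.toLinearMap (r⁻¹ • L.symm x) := rfl
      rw [zero_add, h1]
      simp [smul_smul, mul_inv_cancel₀ hr0.ne']
  have hminr := hminE _ ⟨Lr, 0, rfl⟩ hKLr
  rw [vol_ellipsoid_image, vol_ellipsoid_image] at hminr
  have hdetLr : LinearMap.det Lr.toLinearMap = r^(m+1) * LinearMap.det L.toLinearMap := by
    have h1 : Lr.toLinearMap = r • L.toLinearMap := rfl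
    rw [h1, LinearMap.det_smul, finrank_euclideanSpace_fin]
  have hle : |LinearMap.det L.toLinearMap| ≤ |r^(m+1) * LinearMap.det L.toLinearMap| := by
    apply ennreal_cancel_le (vol_ball_pos (m+1)).ne' (vol_ball_ne_top (m+1)) (abs_nonneg _)
    rw [← hdetLr]
    exact hminr
  have hr1 : r = 1 := by
    rw [abs_mul, abs_pow, abs_of_pos hr0] at hle
    have hdpos : 0 < |LinearMap.det L.toLinearMap| := abs_pos.2 hdetL
    have h1 : (1:ℝ) ≤ r^(m+1) := by
      have h2 : 1 * |LinearMap.det L.toLinearMap|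
          ≤ r^(m+1) * |LinearMap.det L.toLinearMap| := by rw [one_mul]; exact hle
      exact (mul_le_mul_iff_left₀ hdpos).1 h2
    by_contra hne1
    have hrlt : r < 1 := lt_of_le_of_ne hrle hne1
    have h2 : r^(m+1) < 1 := pow_lt_one₀ hr0.le hrlt (Nat.succ_ne_zero m)
    linarith
  have hd0 : d = 0 := by
    have h1 : (1:ℝ) = 1 - ‖d‖^2 := by rw [← hr2, hr1]; norm_num
    have h2 : ‖d‖ = 0 := by nlinarith [norm_nonneg d]
    exact norm_eq_zero.1 h2
  have hc0 : c = 0 := by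
    have h1 : c = L d := by rw [hd, LinearEquiv.apply_symm_apply]
    rw [h1, hd0, map_zero]
  subst hc0
  -- Step B : pull back by L
  set K' := ⇑L.symm '' K with hK'
  have hK'c : Convex ℝ K' := by
    have h1 := hKc.linear_image L.symm.toLinearMap
    simpa [hK'] using h1
  have hK'cp : IsCompact K' := by
    have h1 := hKcp.image L.symm.toLinearMap.continuous_of_finiteDimensional
    simpa [hK'] using h1
  have hK'ne : K'.Nonempty := ⟨L.symm z, z, hzK, rfl⟩
  have hK'sym : K' = -K' := by
    ext x
    simp only [hK', Set.mem_neg, Set.mem_image]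
    constructor
    · rintro ⟨k, hk, rfl⟩
      exact ⟨-k, by rw [hKsym]; exact Set.neg_mem_neg.2 hk, by simp⟩
    · rintro ⟨k, hk, hkx⟩
      exact ⟨-k, by rw [hKsym]; exact Set.neg_mem_neg.2 hk, by rw [map_neg, hkx, neg_neg]⟩
  have hEB : ∀ x ∈ K, ‖L.symm x‖ ≤ 1 := by
    intro x hx
    have h1 := (hmem x).1 (hKE hx)
    simpa using h1
  have hK'B : K' ⊆ B := by
    rintro _ ⟨x, hx, rfl⟩
    exact mem_closedBall_zero_iff.2 (hEB x hx)
  have hK'min : ∀ E', IsEllipsoid E' → K' ⊆ E' → volume B ≤ volume E' := by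
    rintro E' ⟨M, c₃, rfl⟩ hsub
    set LM := M.trans L with hLM
    have hKsub : K ⊆ (fun x => L c₃ + LM x) '' B := by
      intro k hk
      obtain ⟨y, hy, hyx⟩ := hsub ⟨k, hk, rfl⟩
      refine ⟨y, hy, ?_⟩
      have h1 := congrArg L hyx
      simpa [map_add, hLM] using h1
    have h1 := hminE _ ⟨LM, L c₃, rfl⟩ hKsub
    rw [vol_ellipsoid_image, vol_ellipsoid_image] at h1
    have hdet : LinearMap.det LM.toLinearMap
        = LinearMap.det L.toLinearMap * LinearMap.det M.toLinearMap := by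
      have h2 : LM.toLinearMap = L.toLinearMap ∘ₗ M.toLinearMap := rfl
      rw [h2, LinearMap.det_comp]
    have h3 := ennreal_cancel_le (vol_ball_pos (m+1)).ne' (vol_ball_ne_top (m+1))
      (abs_nonneg _) h1
    rw [hdet, abs_mul] at h3
    have hdpos : 0 < |LinearMap.det L.toLinearMap| := abs_pos.2 hdetL
    have h4 : 1 ≤ |LinearMap.det M.toLinearMap| := by
      have h5 : |LinearMap.det L.toLinearMap| * 1
          ≤ |LinearMap.det L.toLinearMap| * |LinearMap.det M.toLinearMap| := by
        rw [mul_one]; exact h3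
      exact (mul_le_mul_iff_right₀ hdpos).1 h5
    rw [vol_ellipsoid_image]
    calc volume B = 1 * volume B := (one_mul _).symm
      _ ≤ ENNReal.ofReal |LinearMap.det M.toLinearMap| * volume B := by
          apply mul_le_mul_left
          rw [← ENNReal.ofReal_one]
          exact ENNReal.ofReal_le_ofReal h4
  have hball := core_john K' hK'c hK'cp hK'ne hK'sym hK'B hK'min
  rintro _ ⟨y, hy, rfl⟩
  have h1 : y ∈ Real.sqrt ((m+1 : ℕ) : ℝ) • K' := hball hy
  obtain ⟨k', hk', hk'y⟩ := Set.mem_smul_set.1 h1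
  obtain ⟨k, hk, rfl⟩ := hk'
  have h2 : L y = Real.sqrt ((m+1 : ℕ) : ℝ) • k := by
    rw [← hk'y]
    simp
  show (0 : EuclideanSpace ℝ (Fin (m+1))) + L y ∈ Real.sqrt ((m+1 : ℕ) : ℝ) • K
  rw [zero_add, h2]
  exact Set.smul_mem_smul_set hk
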